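/- Let f : ℝ → ℝ be absolutely continuous and periodic with period P > 0, with (almost-everywhere) derivative f' square-integrable on [0,P]. If ∫₀^P f(x) dx = 0, then the supremum norm of f satisfies ‖f‖_∞² ≤ (P/(2π)) ∫₀^P f'(x)² dx, where ‖f‖_∞ = sup_{x ∈ [0,P]} |f(x)|. -/

import Mathlib

open MeasureTheory intervalIntegral

private lemma sq_shift_integral (B a b : ℝ) :
    ∫ t in a..b, (t + B) ^ 2 = ((b + B) ^ 3 - (a + B) ^ 3) / 3 := by
  have h : ∀ t : ℝ, HasDerivAt (fun t => (t + B) ^ 3 / 3) ((t + B) ^ 2) t := by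
    intro t
    have := (((hasDerivAt_id t).add_const B).pow 3).div_const 3
    refine this.congr_deriv ?_
    simp only [id_eq]
    ring
  rw [intervalIntegral.integral_eq_sub_of_hasDerivAt (fun t _ => h t)
    (((continuous_id.add continuous_const).pow 2).intervalIntegrable a b)]
  ring

private lemma cauchy_schwarz_integral {μ : Measure ℝ} (g h : ℝ → ℝ)
    (hg : Integrable (fun x => g x ^ 2) μ) (hh : Integrable (fun x => h x ^ 2) μ)
    (hgh : Integrable (fun x => g x * h x) μ) :
    (∫ x, g x * h x ∂μ) ^ 2 ≤ (∫ x, g x ^ 2 ∂μ) * ∫ x, h x ^ 2 ∂μ := by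
  have key : ∀ l : ℝ, 0 ≤ (∫ x, g x ^ 2 ∂μ) * (l * l) + (2 * ∫ x, g x * h x ∂μ) * l
      + ∫ x, h x ^ 2 ∂μ := by
    intro l
    have h0 : 0 ≤ ∫ x, (l * g x + h x) ^ 2 ∂μ := integral_nonneg fun x => sq_nonneg _
    have hexp : ∫ x, (l * g x + h x) ^ 2 ∂μ
        = (∫ x, g x ^ 2 ∂μ) * (l * l) + (2 * ∫ x, g x * h x ∂μ) * l + ∫ x, h x ^ 2 ∂μ := by
      have e : (fun x => (l * g x + h x) ^ 2)
          = fun x => (l * l) * g x ^ 2 + (2 * l) * (g x * h x) + h x ^ 2 := by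
        funext x; ring
      have hI1 : Integrable (fun x => l * l * g x ^ 2 + 2 * l * (g x * h x)) μ :=
        (hg.const_mul (l * l)).add (hgh.const_mul (2 * l))
      rw [e, integral_add hI1 hh,
        integral_add (hg.const_mul (l * l)) (hgh.const_mul (2 * l)),
        MeasureTheory.integral_const_mul, MeasureTheory.integral_const_mul]
      ring
    linarith [h0, hexp.symm.le]
  have hd := discrim_le_zero key
  rw [discrim] at hd
  nlinarith [hd]

private lemma weight_right (f f' : ℝ → ℝ) (a b : ℝ) (hab : a ≤ b)
    (hint : IntervalIntegrable f' volume a b)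
    (hFTC : ∀ c d : ℝ, f d - f c = ∫ t in c..d, f' t) :
    ∫ x in a..b, (f b - f x) = ∫ t in a..b, (t - a) * f' t := by
  haveI hfin : IsFiniteMeasure (volume.restrict (Set.Ioc a b)) :=
    ⟨by rw [Measure.restrict_apply_univ]; exact measure_Ioc_lt_top⟩
  have h0 : IntegrableOn f' (Set.Ioc a b) volume := hint.1
  set F : ℝ → ℝ → ℝ := fun x t => if x < t then f' t else 0 with hFdef
  -- integrability on the product
  have hF : Integrable (Function.uncurry F)
      ((volume.restrict (Set.Ioc a b)).prod (volume.restrict (Set.Ioc a b))) := by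
    have h1 : AEStronglyMeasurable (fun p : ℝ × ℝ => f' p.2)
        ((volume.restrict (Set.Ioc a b)).prod (volume.restrict (Set.Ioc a b))) :=
      h0.aestronglyMeasurable.comp_snd
    have hset : MeasurableSet {p : ℝ × ℝ | p.1 < p.2} :=
      measurableSet_lt measurable_fst measurable_snd
    have heq : Function.uncurry F = {p : ℝ × ℝ | p.1 < p.2}.indicator (fun p => f' p.2) := by
      funext p
      by_cases hp : p.1 < p.2 <;> simp [Function.uncurry, hFdef, Set.indicator_apply, hp]
    have hmaj : Integrable (fun p : ℝ × ℝ => (1 : ℝ) * |f' p.2|)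
        ((volume.restrict (Set.Ioc a b)).prod (volume.restrict (Set.Ioc a b))) :=
      Integrable.mul_prod (integrable_const (1 : ℝ)) h0.abs
    refine hmaj.mono' ?_ ?_
    · rw [heq]; exact h1.indicator hset
    · refine Filter.Eventually.of_forall fun p => ?_
      by_cases hp : p.1 < p.2 <;>
        simp [Function.uncurry, hFdef, hp, abs_nonneg, le_abs_self]
  -- step 1: rewrite the integrand via FTC
  have step1 : ∫ x in a..b, (f b - f x) = ∫ x in a..b, ∫ t in x..b, f' t :=
    integral_congr fun x _ => hFTC x b
  rw [step1, integral_of_le hab, integral_of_le hab]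
  -- step 2: inner integral as an integral over Ioc a b
  have step2 : ∫ x in Set.Ioc a b, (∫ t in x..b, f' t)
      = ∫ x in Set.Ioc a b, ∫ t in Set.Ioc a b, F x t := by
    refine setIntegral_congr_fun measurableSet_Ioc fun x hx => ?_
    rw [integral_of_le hx.2]
    have e1 : ∫ t in Set.Ioc a b, F x t
        = ∫ t in Set.Ioc a b, (Set.Ioi x).indicator f' t := by
      refine setIntegral_congr_fun measurableSet_Ioc fun t _ => ?_
      by_cases h : x < t <;> simp [hFdef, Set.indicator_apply, h]
    rw [e1, MeasureTheory.integral_indicator measurableSet_Ioi, Measure.restrict_restrict measurableSet_Ioi]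
    have e4 : Set.Ioi x ∩ Set.Ioc a b = Set.Ioc x b := by
      ext t
      simp only [Set.mem_inter_iff, Set.mem_Ioi, Set.mem_Ioc]
      exact ⟨fun ⟨h1, _, h3⟩ => ⟨h1, h3⟩, fun ⟨h1, h2⟩ => ⟨h1, hx.1.trans h1, h2⟩⟩
    rw [e4]
  rw [step2]
  rw [MeasureTheory.integral_integral_swap hF]
  refine setIntegral_congr_fun measurableSet_Ioc fun t ht => ?_
  have e2 : ∫ x in Set.Ioc a b, F x t
      = ∫ x in Set.Ioc a b, (Set.Iio t).indicator (fun _ => f' t) x := by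
    refine setIntegral_congr_fun measurableSet_Ioc fun x _ => ?_
    by_cases h : x < t <;> simp [hFdef, Set.indicator_apply, h]
  rw [e2, MeasureTheory.integral_indicator measurableSet_Iio, Measure.restrict_restrict measurableSet_Iio]
  have e3 : Set.Iio t ∩ Set.Ioc a b = Set.Ioo a t := by
    ext x
    simp only [Set.mem_inter_iff, Set.mem_Iio, Set.mem_Ioc, Set.mem_Ioo]
    exact ⟨fun ⟨h1, h2, _⟩ => ⟨h2, h1⟩, fun ⟨h1, h2⟩ => ⟨h2, h1, (h2.le.trans ht.2)⟩⟩
  rw [e3, setIntegral_const, measureReal_def, Real.volume_Ioo, smul_eq_mul,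
    ENNReal.toReal_ofReal (by linarith [ht.1] : (0:ℝ) ≤ t - a)]

private lemma weight_left (f f' : ℝ → ℝ) (a b : ℝ) (hab : a ≤ b)
    (hint : IntervalIntegrable f' volume a b)
    (hFTC : ∀ c d : ℝ, f d - f c = ∫ t in c..d, f' t) :
    ∫ x in a..b, (f x - f a) = ∫ t in a..b, (b - t) * f' t := by
  haveI hfin : IsFiniteMeasure (volume.restrict (Set.Ioc a b)) :=
    ⟨by rw [Measure.restrict_apply_univ]; exact measure_Ioc_lt_top⟩
  have h0 : IntegrableOn f' (Set.Ioc a b) volume := hint.1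
  set F : ℝ → ℝ → ℝ := fun x t => if t ≤ x then f' t else 0 with hFdef
  have hF : Integrable (Function.uncurry F)
      ((volume.restrict (Set.Ioc a b)).prod (volume.restrict (Set.Ioc a b))) := by
    have h1 : AEStronglyMeasurable (fun p : ℝ × ℝ => f' p.2)
        ((volume.restrict (Set.Ioc a b)).prod (volume.restrict (Set.Ioc a b))) :=
      h0.aestronglyMeasurable.comp_snd
    have hset : MeasurableSet {p : ℝ × ℝ | p.2 ≤ p.1} :=
      measurableSet_le measurable_snd measurable_fst
    have heq : Function.uncurry F = {p : ℝ × ℝ | p.2 ≤ p.1}.indicator (fun p => f' p.2) := by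
      funext p
      by_cases hp : p.2 ≤ p.1 <;> simp [Function.uncurry, hFdef, Set.indicator_apply, hp]
    have hmaj : Integrable (fun p : ℝ × ℝ => (1 : ℝ) * |f' p.2|)
        ((volume.restrict (Set.Ioc a b)).prod (volume.restrict (Set.Ioc a b))) :=
      Integrable.mul_prod (integrable_const (1 : ℝ)) h0.abs
    refine hmaj.mono' ?_ ?_
    · rw [heq]; exact h1.indicator hset
    · refine Filter.Eventually.of_forall fun p => ?_
      by_cases hp : p.2 ≤ p.1 <;>
        simp [Function.uncurry, hFdef, hp, abs_nonneg, le_abs_self]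
  have step1 : ∫ x in a..b, (f x - f a) = ∫ x in a..b, ∫ t in a..x, f' t :=
    integral_congr fun x _ => hFTC a x
  rw [step1, integral_of_le hab, integral_of_le hab]
  have step2 : ∫ x in Set.Ioc a b, (∫ t in a..x, f' t)
      = ∫ x in Set.Ioc a b, ∫ t in Set.Ioc a b, F x t := by
    refine setIntegral_congr_fun measurableSet_Ioc fun x hx => ?_
    rw [integral_of_le hx.1.le]
    have e1 : ∫ t in Set.Ioc a b, F x t
        = ∫ t in Set.Ioc a b, (Set.Iic x).indicator f' t := by
      refine setIntegral_congr_fun measurableSet_Ioc fun t _ => ?_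
      by_cases h : t ≤ x <;> simp [hFdef, Set.indicator_apply, h]
    rw [e1, MeasureTheory.integral_indicator measurableSet_Iic, Measure.restrict_restrict measurableSet_Iic]
    have e4 : Set.Iic x ∩ Set.Ioc a b = Set.Ioc a x := by
      ext t
      simp only [Set.mem_inter_iff, Set.mem_Iic, Set.mem_Ioc]
      exact ⟨fun ⟨h1, h2, _⟩ => ⟨h2, h1⟩, fun ⟨h1, h2⟩ => ⟨h2, h1, h2.trans hx.2⟩⟩
    rw [e4]
  rw [step2]
  rw [MeasureTheory.integral_integral_swap hF]
  refine setIntegral_congr_fun measurableSet_Ioc fun t ht => ?_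
  have e2 : ∫ x in Set.Ioc a b, F x t
      = ∫ x in Set.Ioc a b, (Set.Ici t).indicator (fun _ => f' t) x := by
    refine setIntegral_congr_fun measurableSet_Ioc fun x _ => ?_
    by_cases h : t ≤ x <;> simp [hFdef, Set.indicator_apply, h]
  rw [e2, MeasureTheory.integral_indicator measurableSet_Ici, Measure.restrict_restrict measurableSet_Ici]
  have e3 : Set.Ici t ∩ Set.Ioc a b = Set.Icc t b := by
    ext x
    simp only [Set.mem_inter_iff, Set.mem_Ici, Set.mem_Ioc, Set.mem_Icc]
    exact ⟨fun ⟨h1, _, h3⟩ => ⟨h1, h3⟩, fun ⟨h1, h2⟩ => ⟨h1, lt_of_lt_of_le ht.1 h1, h2⟩⟩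
  rw [e3, setIntegral_const, measureReal_def, Real.volume_Icc, smul_eq_mul,
    ENNReal.toReal_ofReal (by linarith [ht.2] : (0:ℝ) ≤ b - t)]



/-- **Sup-norm estimate for zero-mean periodic functions** (Appendix Lemma A.2).
For an absolutely continuous `P`-periodic `f` with square-integrable a.e.
derivative `f'` and `∫₀^P f = 0`, one has
`‖f‖_∞² ≤ (P/(2π)) ∫₀^P f'²`, where `‖f‖_∞ = sup_{x ∈ [0,P]} |f x|`. -/
theorem sup_norm_sq_le_of_zero_mean
    (f f' : ℝ → ℝ) (P : ℝ) (hP : 0 < P)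
    (hper : Function.Periodic f P)
    (hint : ∀ a b : ℝ, IntervalIntegrable f' volume a b)
    (hFTC : ∀ a b : ℝ, f b - f a = ∫ t in a..b, f' t)
    (hL2 : IntegrableOn (fun x => (f' x) ^ 2) (Set.Icc 0 P) volume)
    (hmean : (∫ x in (0:ℝ)..P, f x) = 0) :
    (⨆ x ∈ Set.Icc (0:ℝ) P, |f x|) ^ 2 ≤
      (P / (2 * Real.pi)) * ∫ x in (0:ℝ)..P, (f' x) ^ 2 := by
  -- continuity of f
  have hfeq : f = fun x => f 0 + ∫ t in (0:ℝ)..x, f' t := by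
    funext x
    have := hFTC 0 x
    linarith
  have hcont : Continuous f := by
    rw [hfeq]
    exact continuous_const.add (intervalIntegral.continuous_primitive hint 0)
  -- point where |f| attains its maximum on [0,P]
  obtain ⟨m, hm, hmax⟩ := isCompact_Icc.exists_isMaxOn (Set.nonempty_Icc.mpr hP.le)
    (continuous_abs.comp hcont).continuousOn
  have hm0 : (0:ℝ) ≤ m := hm.1
  have hmP : m ≤ P := hm.2
  -- it suffices to bound f m ^ 2
  suffices hkey : f m ^ 2 ≤ (P / (2 * Real.pi)) * ∫ x in (0:ℝ)..P, (f' x) ^ 2 by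
    have hS0 : 0 ≤ ⨆ x ∈ Set.Icc (0:ℝ) P, |f x| :=
      Real.iSup_nonneg fun x => Real.iSup_nonneg fun _ => abs_nonneg _
    have hSle : (⨆ x ∈ Set.Icc (0:ℝ) P, |f x|) ≤ |f m| :=
      Real.iSup_le (fun x => Real.iSup_le (fun hx => hmax hx) (abs_nonneg _)) (abs_nonneg _)
    calc (⨆ x ∈ Set.Icc (0:ℝ) P, |f x|) ^ 2 ≤ |f m| ^ 2 := by
          exact pow_le_pow_left₀ hS0 hSle 2
      _ = f m ^ 2 := sq_abs _
      _ ≤ _ := hkey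
  -- the weight function
  set c : ℝ := P / 2 - m with hc
  set v : ℝ → ℝ := fun t => t + c - (if m < t then P else 0) with hv
  -- identities from Fubini lemmas
  have h1 : ∫ x in (0:ℝ)..m, (f m - f x) = ∫ t in (0:ℝ)..m, (t - 0) * f' t :=
    weight_right f f' 0 m hm0 (hint 0 m) hFTC
  have h2 : ∫ x in m..P, (f x - f m) = ∫ t in m..P, (P - t) * f' t :=
    weight_left f f' m P hmP (hint m P) hFTC
  -- zero total derivative integral
  have hfP : f P = f 0 := by
    have := hper 0
    rwa [zero_add] at this
  have hzero : (∫ t in (0:ℝ)..m, f' t) + (∫ t in m..P, f' t) = 0 := by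
    rw [integral_add_adjacent_intervals (hint 0 m) (hint m P), ← hFTC 0 P, hfP]
    ring
  -- P * f m as an integral against the weight
  have hsub1 : IntervalIntegrable (fun x => f m - f x) volume 0 m :=
    (continuous_const.sub hcont).intervalIntegrable 0 m
  have hsub2 : IntervalIntegrable (fun x => f m - f x) volume m P :=
    (continuous_const.sub hcont).intervalIntegrable m P
  have hPfm0 : ∫ x in (0:ℝ)..P, (f m - f x) = P * f m := by
    rw [integral_sub (intervalIntegrable_const) (hcont.intervalIntegrable 0 P), hmean,
      intervalIntegral.integral_const, sub_zero, smul_eq_mul]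
    ring
  have hPfm1 : P * f m = (∫ t in (0:ℝ)..m, (t - 0) * f' t) - ∫ t in m..P, (P - t) * f' t := by
    rw [← h1, ← h2, ← hPfm0, ← integral_add_adjacent_intervals hsub1 hsub2]
    have : ∫ x in m..P, (f x - f m) = - ∫ x in m..P, (f m - f x) := by
      rw [← intervalIntegral.integral_neg]
      exact integral_congr fun x _ => by ring
    rw [this]
    ring
  -- integrability of the weighted integrands
  have hiv1 : IntervalIntegrable (fun t => (t + c) * f' t) volume 0 m :=
    (hint 0 m).continuousOn_mul ((continuous_id.add continuous_const).continuousOn)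
  have hiv2 : IntervalIntegrable (fun t => (t + (c - P)) * f' t) volume m P :=
    (hint m P).continuousOn_mul ((continuous_id.add continuous_const).continuousOn)
  have hveq1 : Set.EqOn (fun t => (t + c) * f' t) (fun t => v t * f' t) (Set.Ioc 0 m) := by
    intro t ht
    simp only [hv, if_neg (not_lt.mpr ht.2)]
    ring
  have hveq2 : Set.EqOn (fun t => (t + (c - P)) * f' t) (fun t => v t * f' t) (Set.Ioc m P) := by
    intro t ht
    simp only [hv, if_pos ht.1]
    ring
  have hivv1 : IntervalIntegrable (fun t => v t * f' t) volume 0 m := by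
    rw [intervalIntegrable_iff_integrableOn_Ioc_of_le hm0]
    exact (((intervalIntegrable_iff_integrableOn_Ioc_of_le hm0).mp hiv1).congr_fun hveq1
      measurableSet_Ioc)
  have hivv2 : IntervalIntegrable (fun t => v t * f' t) volume m P := by
    rw [intervalIntegrable_iff_integrableOn_Ioc_of_le hmP]
    exact (((intervalIntegrable_iff_integrableOn_Ioc_of_le hmP).mp hiv2).congr_fun hveq2
      measurableSet_Ioc)
  have he1 : ∫ t in (0:ℝ)..m, v t * f' t = ∫ t in (0:ℝ)..m, (t + c) * f' t := by
    refine (intervalIntegral.integral_congr_ae ?_).symm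
    refine Filter.Eventually.of_forall fun t ht => ?_
    rw [Set.uIoc_of_le hm0] at ht
    exact hveq1 ht
  have he2 : ∫ t in m..P, v t * f' t = ∫ t in m..P, (t + (c - P)) * f' t := by
    refine (intervalIntegral.integral_congr_ae ?_).symm
    refine Filter.Eventually.of_forall fun t ht => ?_
    rw [Set.uIoc_of_le hmP] at ht
    exact hveq2 ht
  -- expansions
  have hid1 : IntervalIntegrable (fun t => (t - 0) * f' t) volume 0 m :=
    (hint 0 m).continuousOn_mul ((continuous_id.sub continuous_const).continuousOn)
  have hid2 : IntervalIntegrable (fun t => (P - t) * f' t) volume m P :=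
    (hint m P).continuousOn_mul ((continuous_const.sub continuous_id).continuousOn)
  have hexp1 : ∫ t in (0:ℝ)..m, (t + c) * f' t
      = (∫ t in (0:ℝ)..m, (t - 0) * f' t) + c * ∫ t in (0:ℝ)..m, f' t := by
    rw [← intervalIntegral.integral_const_mul, ← integral_add hid1 ((hint 0 m).const_mul c)]
    exact integral_congr fun t _ => by ring
  have hexp2 : ∫ t in m..P, (t + (c - P)) * f' t
      = (-∫ t in m..P, (P - t) * f' t) + c * ∫ t in m..P, f' t := by
    have hsum : (∫ t in m..P, (t + (c - P)) * f' t) + ∫ t in m..P, (P - t) * f' t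
        = c * ∫ t in m..P, f' t := by
      rw [← integral_add hiv2 hid2, ← intervalIntegral.integral_const_mul]
      exact integral_congr fun t _ => by ring
    linarith
  have hPfm : ∫ t in (0:ℝ)..P, v t * f' t = P * f m := by
    have hz2 : c * (∫ t in (0:ℝ)..m, f' t) + c * ∫ t in m..P, f' t = 0 := by
      have := congrArg (fun z => c * z) hzero
      simpa [mul_add] using this
    rw [← integral_add_adjacent_intervals hivv1 hivv2, he1, he2, hexp1, hexp2, hPfm1]
    linarith
  -- the weight has L² norm P³/12
  have hw1 : IntervalIntegrable (fun t => v t ^ 2) volume 0 m := by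
    rw [intervalIntegrable_iff_integrableOn_Ioc_of_le hm0]
    refine ((((continuous_id.add continuous_const).pow 2).intervalIntegrable 0 m :
      IntervalIntegrable (fun t => (t + c) ^ 2) volume 0 m).1).congr_fun
      ?_ measurableSet_Ioc
    intro t ht
    simp only [hv, id_eq, Pi.pow_apply, Pi.add_apply, if_neg (not_lt.mpr ht.2)]
    ring
  have hw2 : IntervalIntegrable (fun t => v t ^ 2) volume m P := by
    rw [intervalIntegrable_iff_integrableOn_Ioc_of_le hmP]
    refine ((((continuous_id.add continuous_const).pow 2).intervalIntegrable m P :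
      IntervalIntegrable (fun t => (t + (c - P)) ^ 2) volume m P).1).congr_fun
      ?_ measurableSet_Ioc
    intro t ht
    simp only [hv, id_eq, Pi.pow_apply, Pi.add_apply, if_pos ht.1]
    ring
  have hvsq : ∫ t in (0:ℝ)..P, v t ^ 2 = P ^ 3 / 12 := by
    have q1 : ∫ t in (0:ℝ)..m, v t ^ 2 = ∫ t in (0:ℝ)..m, (t + c) ^ 2 := by
      refine (intervalIntegral.integral_congr_ae ?_).symm
      refine Filter.Eventually.of_forall fun t ht => ?_
      rw [Set.uIoc_of_le hm0] at ht
      simp only [hv, if_neg (not_lt.mpr ht.2)]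
      ring
    have q2 : ∫ t in m..P, v t ^ 2 = ∫ t in m..P, (t + (c - P)) ^ 2 := by
      refine (intervalIntegral.integral_congr_ae ?_).symm
      refine Filter.Eventually.of_forall fun t ht => ?_
      rw [Set.uIoc_of_le hmP] at ht
      simp only [hv, if_pos ht.1]
      ring
    rw [← integral_add_adjacent_intervals hw1 hw2, q1, q2, sq_shift_integral,
      sq_shift_integral, hc]
    ring
  -- Cauchy–Schwarz
  have hIoc1 : Integrable (fun t => v t ^ 2) (volume.restrict (Set.Ioc 0 P)) :=
    (hw1.trans hw2).1
  have hIoc2 : Integrable (fun t => f' t ^ 2) (volume.restrict (Set.Ioc 0 P)) :=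
    hL2.mono_set Set.Ioc_subset_Icc_self
  have hIoc3 : Integrable (fun t => v t * f' t) (volume.restrict (Set.Ioc 0 P)) :=
    (hivv1.trans hivv2).1
  have hcs := cauchy_schwarz_integral v f' hIoc1 hIoc2 hIoc3
  rw [← integral_of_le hP.le, ← integral_of_le hP.le, ← integral_of_le hP.le, hPfm, hvsq] at hcs
  -- conclude
  have hf2 : 0 ≤ ∫ x in (0:ℝ)..P, f' x ^ 2 :=
    intervalIntegral.integral_nonneg hP.le fun u _ => sq_nonneg _
  have hpi : Real.pi ≤ 4 := Real.pi_le_four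
  have hpi0 : 0 < Real.pi := Real.pi_pos
  have hstep : f m ^ 2 ≤ P / 12 * ∫ x in (0:ℝ)..P, f' x ^ 2 := by
    nlinarith [hcs, mul_pos hP hP, sq_nonneg (f m)]
  calc f m ^ 2 ≤ P / 12 * ∫ x in (0:ℝ)..P, f' x ^ 2 := hstep
    _ ≤ P / (2 * Real.pi) * ∫ x in (0:ℝ)..P, f' x ^ 2 := by
        refine mul_le_mul_of_nonneg_right ?_ hf2
        rw [div_le_div_iff₀ (by norm_num) (by positivity)]
        nlinarith [hpi, hpi0, hP.le]
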